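/- arXiv:2502.03601 — 2 statements merged into one kernel-verified Lean document; each statement's English description precedes it below -/
import Mathlib

section
/- Let F(x̂) = J x̂ + b be an invertible affine map on ℝ³ with det(J) > 0, and define the covariant Piola transform ψ¹(v) := Jᵀ (v ∘ F) and the contravariant Piola transform ψ²(v) := det(J) J^{-1} (v ∘ F). Then for any C¹ vector field v on the image, curl(ψ¹(v)) = ψ²(curl v), where the curl on the left is taken in the reference coordinates. -/
open Matrix

/-- The `i`-th partial derivative of a scalar function on `ℝ³`. -/
noncomputable def pderiv3 (i : Fin 3) (f : (Fin 3 → ℝ) → ℝ) (x : Fin 3 → ℝ) : ℝ :=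
  fderiv ℝ f x (Pi.single i 1)

/-- The three-dimensional curl of a vector field on `ℝ³`. -/
noncomputable def curl3 (v : (Fin 3 → ℝ) → Fin 3 → ℝ) (x : Fin 3 → ℝ) : Fin 3 → ℝ :=
  ![pderiv3 1 (fun y => v y 2) x - pderiv3 2 (fun y => v y 1) x,
    pderiv3 2 (fun y => v y 0) x - pderiv3 0 (fun y => v y 2) x,
    pderiv3 0 (fun y => v y 1) x - pderiv3 1 (fun y => v y 0) x]

lemma piola_key
    (J : Matrix (Fin 3) (Fin 3) ℝ) (b : Fin 3 → ℝ)
    (v : (Fin 3 → ℝ) → Fin 3 → ℝ) (hv : ContDiff ℝ 1 v)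
    (xh : Fin 3 → ℝ) (i j : Fin 3) :
    pderiv3 j (fun y => Jᵀ.mulVec (v (J.mulVec y + b)) i) xh
      = ∑ k, ∑ l, J k i * (J l j *
          pderiv3 l (fun y => v y k) (J.mulVec xh + b)) := by
  classical
  set L : (Fin 3 → ℝ) →L[ℝ] (Fin 3 → ℝ) :=
    LinearMap.toContinuousLinearMap (Matrix.mulVecLin J) with hL
  have hFd : HasFDerivAt (fun y => J.mulVec y + b) L xh := by
    have h1 : HasFDerivAt (fun y => L y) L xh := L.hasFDerivAt
    have h2 := h1.add_const b
    exact h2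
  have hvk : ∀ k : Fin 3, Differentiable ℝ (fun z => v z k) := fun k =>
    ((ContinuousLinearMap.proj k (R := ℝ) (φ := fun _ : Fin 3 => ℝ)).contDiff.comp
      hv).differentiable one_ne_zero
  have hcomp : ∀ k : Fin 3, HasFDerivAt (fun y => v (J.mulVec y + b) k)
      ((fderiv ℝ (fun z => v z k) (J.mulVec xh + b)).comp L) xh :=
    fun k => (((hvk k) (J.mulVec xh + b)).hasFDerivAt.comp xh hFd :)
  have hexp : (fun y => Jᵀ.mulVec (v (J.mulVec y + b)) i)
      = fun y => ∑ k, J k i * v (J.mulVec y + b) k := by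
    funext y
    simp [Matrix.mulVec, dotProduct, Matrix.transpose_apply, mul_comm]
  rw [hexp]
  have hsum : HasFDerivAt (fun y => ∑ k : Fin 3, J k i * v (J.mulVec y + b) k)
      (∑ k : Fin 3, J k i •
        ((fderiv ℝ (fun z => v z k) (J.mulVec xh + b)).comp L)) xh :=
    HasFDerivAt.fun_sum (fun k _ => (hcomp k).const_mul (J k i))
  rw [pderiv3, hsum.fderiv]
  rw [ContinuousLinearMap.sum_apply]
  refine Finset.sum_congr rfl (fun k _ => ?_)
  rw [ContinuousLinearMap.smul_apply, ContinuousLinearMap.comp_apply, smul_eq_mul]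
  have hLval : L (Pi.single j 1) = ∑ l : Fin 3, J l j • (Pi.single l 1 : Fin 3 → ℝ) := by
    have : L (Pi.single j 1) = J.mulVec (Pi.single j 1) := rfl
    rw [this]
    funext m
    simp [Matrix.mulVec, dotProduct, Pi.single_apply, Finset.sum_apply,
      mul_comm]
  rw [hLval]
  simp only [map_sum, _root_.map_smul, smul_eq_mul, Finset.mul_sum, pderiv3]

/-- Commuting property of the covariant Piola transform with the curl: for the
invertible affine map `F(x̂) = J x̂ + b` with `det J > 0`, the covariant Piola
transform `ψ¹(v) := Jᵀ (v ∘ F)` and the contravariant Piola transform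
`ψ²(v) := det(J) J⁻¹ (v ∘ F)` satisfy `curl(ψ¹(v)) = ψ²(curl v)` for every `C¹`
vector field `v`, the left-hand curl being taken in reference coordinates. -/
theorem curl_covariant_piola
    (J : Matrix (Fin 3) (Fin 3) ℝ) (b : Fin 3 → ℝ) (hJ : 0 < J.det)
    (v : (Fin 3 → ℝ) → Fin 3 → ℝ) (hv : ContDiff ℝ 1 v) :
    ∀ xh : Fin 3 → ℝ,
      curl3 (fun yh => Jᵀ.mulVec (v (J.mulVec yh + b))) xh
        = J.det • J⁻¹.mulVec (curl3 v (J.mulVec xh + b)) := by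
  intro xh
  have hdet : J.det ≠ 0 := ne_of_gt hJ
  have hinv : J.det • J⁻¹ = J.adjugate := by
    rw [Matrix.inv_def, smul_smul, Ring.inverse_eq_inv', mul_inv_cancel₀ hdet,
      one_smul]
  have hRHS : J.det • J⁻¹.mulVec (curl3 v (J.mulVec xh + b))
      = (J.adjugate).mulVec (curl3 v (J.mulVec xh + b)) := by
    rw [← hinv, Matrix.smul_mulVec]
  rw [hRHS]
  funext i
  have hk := piola_key J b v hv xh
  fin_cases i <;>
  · simp only [curl3, Fin.zero_eta, Fin.mk_one, Fin.reduceFinMk, Matrix.cons_val_zero, Matrix.cons_val_one, Matrix.head_cons,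
      Matrix.cons_val_two, Matrix.tail_cons, Fin.isValue]
    rw [hk, hk]
    simp only [Fin.sum_univ_three, Matrix.adjugate_fin_three, Matrix.mulVec,
      dotProduct, Fin.sum_univ_three, Matrix.of_apply, Matrix.cons_val',
      Matrix.cons_val_zero, Matrix.cons_val_one, Matrix.head_cons,
      Matrix.cons_val_two, Matrix.tail_cons, Matrix.head_fin_const, curl3,
      Matrix.empty_val', Matrix.cons_val_fin_one]
    ring
end

section
/- Let F(x̂) = J x̂ + b be an invertible affine map on ℝ³ with det(J) > 0, and define the contravariant Piola transform ψ²(v) := det(J) J^{-1}(v ∘ F) and ψ³(v) := det(J)(v ∘ F). Then for any C¹ vector field v, div(ψ²(v)) = ψ³(div v), where the divergence on the left is taken in reference coordinates. -/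
open Matrix

/-- The three-dimensional divergence of a vector field on `ℝ³`. -/
noncomputable def div3 (v : (Fin 3 → ℝ) → Fin 3 → ℝ) (x : Fin 3 → ℝ) : ℝ :=
  ∑ i : Fin 3, pderiv3 i (fun y => v y i) x

/-- Commuting property of the contravariant Piola transform with the divergence:
for the invertible affine map `F(x̂) = J x̂ + b` with `det J > 0`, the
contravariant Piola transform `ψ²(v) := det(J) J⁻¹ (v ∘ F)` and the scaled
pullback `ψ³(u) := det(J) (u ∘ F)` satisfy `div(ψ²(v)) = ψ³(div v)` for every
`C¹` vector field `v`, the left-hand divergence being taken in reference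
coordinates. -/
theorem div_contravariant_piola
    (J : Matrix (Fin 3) (Fin 3) ℝ) (b : Fin 3 → ℝ) (hJ : 0 < J.det)
    (v : (Fin 3 → ℝ) → Fin 3 → ℝ) (hv : ContDiff ℝ 1 v) :
    ∀ xh : Fin 3 → ℝ,
      div3 (fun yh => J.det • J⁻¹.mulVec (v (J.mulVec yh + b))) xh
        = J.det * div3 v (J.mulVec xh + b) := by
  intro x
  have hJu : IsUnit J.det := isUnit_iff_ne_zero.2 (ne_of_gt hJ)
  set F : (Fin 3 → ℝ) → Fin 3 → ℝ := fun y => J.mulVec y + b with hFdef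
  set L : (Fin 3 → ℝ) →L[ℝ] (Fin 3 → ℝ) :=
    LinearMap.toContinuousLinearMap (Matrix.mulVecLin J) with hLdef
  have hF : HasFDerivAt F L x := by
    have h1 : HasFDerivAt (fun y => L y + b) L x := (L.hasFDerivAt).add_const b
    have : (fun y => L y + b) = F := by
      funext y; simp [hFdef, hLdef]
    rwa [this] at h1
  have hvd := (hv.differentiable one_ne_zero).differentiableAt (x := F x) |>.hasFDerivAt
  set D : Fin 3 → ((Fin 3 → ℝ) →L[ℝ] ℝ) := fun j =>
    (ContinuousLinearMap.proj j).comp (fderiv ℝ v (F x)) with hDdef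
  have hDj : ∀ j, HasFDerivAt (fun z => v z j) (D j) (F x) := by
    intro j
    show HasFDerivAt (fun z => v z j)
      ((ContinuousLinearMap.proj j).comp (fderiv ℝ v (F x))) (F x)
    exact ((ContinuousLinearMap.proj j).hasFDerivAt).comp (F x) hvd
  have happly : ∀ (f : (Fin 3 → ℝ) →L[ℝ] ℝ) (w : Fin 3 → ℝ),
      f w = ∑ k, w k * f (Pi.single k 1) := by
    intro f w
    have hw : w = ∑ k, w k • (Pi.single k 1 : Fin 3 → ℝ) := by
      funext j
      simp [Finset.sum_apply, Pi.single_apply]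
    rw [show f w = f (∑ k, w k • (Pi.single k 1 : Fin 3 → ℝ)) by rw [← hw]]
    rw [map_sum]
    simp [smul_eq_mul]
  have hcomp : ∀ i, pderiv3 i (fun y => (J.det • J⁻¹.mulVec (v (F y))) i) x
      = J.det * ∑ j, J⁻¹ i j * ∑ k, J k i * D j (Pi.single k 1) := by
    intro i
    have h1 : ∀ j, HasFDerivAt (fun y => v (F y) j) ((D j).comp L) x :=
      fun j => (hDj j).comp x hF
    have h2 : HasFDerivAt (fun y => ∑ j, J⁻¹ i j * v (F y) j)
        (∑ j, J⁻¹ i j • ((D j).comp L)) x :=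
      HasFDerivAt.fun_sum (fun j _ => (h1 j).const_mul _)
    have h3 : HasFDerivAt (fun y => J.det * ∑ j, J⁻¹ i j * v (F y) j)
        (J.det • ∑ j, J⁻¹ i j • ((D j).comp L)) x := h2.const_mul _
    have hfun : (fun y => (J.det • J⁻¹.mulVec (v (F y))) i)
        = fun y => J.det * ∑ j, J⁻¹ i j * v (F y) j := by
      funext y
      simp [Matrix.mulVec, dotProduct]
    rw [pderiv3, hfun, h3.fderiv]
    simp only [ContinuousLinearMap.smul_apply, ContinuousLinearMap.sum_apply,
      ContinuousLinearMap.smul_apply, ContinuousLinearMap.coe_smul', Pi.smul_apply,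
      ContinuousLinearMap.comp_apply, smul_eq_mul]
    congr 1
    refine Finset.sum_congr rfl (fun j _ => ?_)
    congr 1
    have hL : L (Pi.single i 1) = fun k => J k i := by
      funext k
      simp [hLdef, Matrix.mulVecLin_apply, Matrix.mulVec_single]
    rw [hL, happly (D j)]
  have hrhs : ∀ j, pderiv3 j (fun y => v y j) (F x) = D j (Pi.single j 1) := by
    intro j
    rw [pderiv3, (hDj j).fderiv]
  rw [div3, div3]
  have hc : ∀ j, ∑ k, (∑ i, J k i * J⁻¹ i j) * D j (Pi.single k 1)
      = D j (Pi.single j 1) := by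
    intro j
    have hm : ∀ k, (∑ i, J k i * J⁻¹ i j) = (1 : Matrix (Fin 3) (Fin 3) ℝ) k j := by
      intro k
      rw [← Matrix.mul_nonsing_inv J hJu, Matrix.mul_apply]
    simp only [hm, Matrix.one_apply]
    simp [Finset.sum_ite_eq]
  calc ∑ i, pderiv3 i (fun y => (J.det • J⁻¹.mulVec (v (F y))) i) x
      = ∑ i, J.det * ∑ j, J⁻¹ i j * ∑ k, J k i * D j (Pi.single k 1) := by
        exact Finset.sum_congr rfl (fun i _ => hcomp i)
    _ = J.det * ∑ j, ∑ k, (∑ i, J k i * J⁻¹ i j) * D j (Pi.single k 1) := by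
        rw [← Finset.mul_sum]
        congr 1
        rw [Finset.sum_comm]
        refine Finset.sum_congr rfl (fun j _ => ?_)
        simp only [Finset.mul_sum, Finset.sum_mul]
        rw [Finset.sum_comm]
        refine Finset.sum_congr rfl (fun k _ => ?_)
        refine Finset.sum_congr rfl (fun i _ => ?_)
        ring
    _ = J.det * ∑ j, D j (Pi.single j 1) := by
        congr 1
        exact Finset.sum_congr rfl (fun j _ => hc j)
    _ = J.det * ∑ j, pderiv3 j (fun y => v y j) (F x) := by
        congr 1
        exact Finset.sum_congr rfl (fun j _ => (hrhs j).symm)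
end
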